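/- Let r ≥ 1, let Θ be an r×r complex Hermitian positive semidefinite matrix, and let w be any r×r complex matrix. Then the real number tr(Θ·(w·wᴴ − wᴴ·w)) satisfies tr(Θ·(w·wᴴ − wᴴ·w)) ≥ 2(1−r)·‖w‖_F²·tr(Θ). (This is the key estimate tr(Θ[w,w*]) ≥ 2(1−r)|w|² tr Θ in the proof that the form Ω_{α,β} on the parameter space Z is positive.) -/

import Mathlib

open Matrix
open scoped ComplexOrder

lemma aux_diag_nonneg {n : Type*} [Fintype n] [DecidableEq n]
    {M : Matrix n n ℂ} (hM : M.PosSemidef) (i : n) : 0 ≤ M i i := by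
  have h := hM.dotProduct_mulVec_nonneg (Pi.single i 1)
  simpa [dotProduct, mulVec, Pi.single_apply] using h

lemma aux_trace_nonneg {n : Type*} [Fintype n] [DecidableEq n]
    {M : Matrix n n ℂ} (hM : M.PosSemidef) : 0 ≤ M.trace := by
  rw [Matrix.trace]
  exact Finset.sum_nonneg fun i _ => aux_diag_nonneg hM i

open scoped MatrixOrder in
lemma aux_trace_mul_nonneg {n : Type*} [Fintype n] [DecidableEq n]
    {A B : Matrix n n ℂ} (hA : A.PosSemidef) (hB : B.PosSemidef) :
    0 ≤ (A * B).trace := by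
  have hsq : CFC.sqrt B * CFC.sqrt B = B := by
    have := CFC.sq_sqrt B hB.nonneg
    rwa [pow_two] at this
  have h1 : (A * B).trace = ((CFC.sqrt B)ᴴ * A * CFC.sqrt B).trace := by
    rw [(CFC.sqrt_nonneg B).posSemidef.isHermitian.eq]
    conv_lhs => rw [← hsq]
    rw [← Matrix.mul_assoc, Matrix.trace_mul_comm, ← Matrix.mul_assoc]
  rw [h1]
  exact aux_trace_nonneg (hA.conjTranspose_mul_mul_same _)

lemma aux_shift_psd {n : Type*} [Fintype n] [DecidableEq n] (w : Matrix n n ℂ) :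
    ((wᴴ * w).trace • (1 : Matrix n n ℂ) - wᴴ * w).PosSemidef := by
  have hA : (wᴴ * w).IsHermitian := Matrix.isHermitian_conjTranspose_mul_self w
  set C : ℝ := ∑ i, ∑ k, Complex.normSq (w k i) with hC
  have hc : (wᴴ * w).trace = (C : ℂ) := by
    simp [Matrix.trace, Matrix.diag, Matrix.mul_apply, Matrix.conjTranspose_apply,
      hC, Complex.normSq_eq_conj_mul_self]
  rw [posSemidef_iff_dotProduct_mulVec]
  constructor
  · unfold Matrix.IsHermitian
    rw [conjTranspose_sub, conjTranspose_smul, conjTranspose_one, hA.eq, hc]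
    simp
  · intro x
    have key : star x ⬝ᵥ ((wᴴ * w) *ᵥ x) = star (w *ᵥ x) ⬝ᵥ (w *ᵥ x) := by
      rw [← mulVec_mulVec, dotProduct_mulVec, vecMul_conjTranspose, star_star]
    set y := w *ᵥ x with hy
    set X : ℝ := ∑ i, Complex.normSq (x i) with hX
    set Y : ℝ := ∑ i, Complex.normSq (y i) with hYdef
    have hxx : star x ⬝ᵥ x = (X : ℂ) := by
      simp [dotProduct, hX, Complex.normSq_eq_conj_mul_self]
    have hyy : star y ⬝ᵥ y = (Y : ℂ) := by
      simp [dotProduct, hYdef, Complex.normSq_eq_conj_mul_self]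
    have hform : star x ⬝ᵥ (((wᴴ * w).trace • (1 : Matrix n n ℂ) - wᴴ * w) *ᵥ x)
        = ((C * X - Y : ℝ) : ℂ) := by
      rw [sub_mulVec, dotProduct_sub, key, hyy, smul_mulVec, one_mulVec,
        dotProduct_smul, hxx, hc]
      push_cast
      simp [smul_eq_mul]
    rw [hform]
    have hbound : Y ≤ C * X := by
      have h1 : ∀ i, Complex.normSq (y i) ≤ (∑ k, Complex.normSq (w i k)) * X := by
        intro i
        have h2 : ‖y i‖ ≤ ∑ k, ‖w i k‖ * ‖x k‖ := by
          rw [hy]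
          simpa [mulVec, dotProduct] using
            (norm_sum_le Finset.univ (fun k => w i k * x k)).trans_eq (by simp)
        have h3 : (∑ k, ‖w i k‖ * ‖x k‖) ^ 2
            ≤ (∑ k, ‖w i k‖ ^ 2) * (∑ k, ‖x k‖ ^ 2) :=
          Finset.sum_mul_sq_le_sq_mul_sq _ _ _
        have h4 : Complex.normSq (y i) = ‖y i‖ ^ 2 := (Complex.sq_norm _).symm
        have h5 : ‖y i‖ ^ 2 ≤ (∑ k, ‖w i k‖ * ‖x k‖) ^ 2 := by
          apply pow_le_pow_left₀ (norm_nonneg _) h2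
        calc Complex.normSq (y i) ≤ (∑ k, ‖w i k‖ ^ 2) * (∑ k, ‖x k‖ ^ 2) :=
              h4 ▸ (h5.trans h3)
          _ = (∑ k, Complex.normSq (w i k)) * X := by simp [hX, Complex.sq_norm]
      calc Y ≤ ∑ i, (∑ k, Complex.normSq (w i k)) * X :=
            Finset.sum_le_sum fun i _ => h1 i
        _ = (∑ i, ∑ k, Complex.normSq (w i k)) * X := by rw [Finset.sum_mul]
        _ = C * X := by rw [hC, Finset.sum_comm]
    have : (0:ℝ) ≤ C * X - Y := by linarith
    exact_mod_cast Complex.zero_le_real.mpr this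

/-- For `r ≥ 1`, a Hermitian positive semidefinite `r × r` complex matrix `Θ` and any
`r × r` complex matrix `w`, one has `tr(Θ·(w wᴴ − wᴴ w)) ≥ 2(1−r)·‖w‖_F²·tr(Θ)`,
where `‖w‖_F² = tr(wᴴ w)` is the squared Frobenius norm.  (The inequality is between
complex numbers that are in fact real, using the partial order on `ℂ`.) -/
theorem trace_posSemidef_selfCommutator_lower_bound
    (r : ℕ) (hr : 1 ≤ r) (Θ w : Matrix (Fin r) (Fin r) ℂ)
    (hΘ : Θ.IsHermitian) (hΘpsd : Θ.PosSemidef) :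
    ((2 * (1 - (r : ℝ)) * ((wᴴ * w).trace.re) : ℝ) : ℂ) * Θ.trace
      ≤ (Θ * (w * wᴴ - wᴴ * w)).trace := by
  rcases Nat.lt_or_ge r 2 with h2 | h2
  · have hr1 : r = 1 := by omega
    subst hr1
    have hcomm : w * wᴴ = wᴴ * w := by
      ext i j
      fin_cases i <;> fin_cases j <;>
        simp [Matrix.mul_apply, Fin.sum_univ_one, mul_comm]
    rw [hcomm, sub_self, Matrix.mul_zero, Matrix.trace_zero]
    norm_num
  · have hApsd := Matrix.posSemidef_conjTranspose_mul_self w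
    have hPpsd := Matrix.posSemidef_self_mul_conjTranspose w
    -- real forms of the traces
    have hAt0 : 0 ≤ (wᴴ * w).trace := aux_trace_nonneg hApsd
    have hTt0 : 0 ≤ Θ.trace := aux_trace_nonneg hΘpsd
    obtain ⟨hAre, hAim⟩ := Complex.le_def.mp hAt0
    obtain ⟨hTre, hTim⟩ := Complex.le_def.mp hTt0
    simp only [Complex.zero_re, Complex.zero_im] at hAre hAim hTre hTim
    set c : ℝ := (wᴴ * w).trace.re with hcdef
    set t : ℝ := Θ.trace.re with htdef
    have hAc : (wᴴ * w).trace = (c : ℂ) := Complex.ext (by simp [hcdef]) (by simp [← hAim])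
    have hTc : Θ.trace = (t : ℂ) := Complex.ext (by simp [htdef]) (by simp [← hTim])
    -- the two trace estimates
    have h1 : 0 ≤ (Θ * (w * wᴴ)).trace := aux_trace_mul_nonneg hΘpsd hPpsd
    have h2' : (Θ * (wᴴ * w)).trace ≤ (c : ℂ) * (t : ℂ) := by
      have h0 : 0 ≤ (Θ * ((wᴴ * w).trace • (1 : Matrix (Fin r) (Fin r) ℂ) - wᴴ * w)).trace :=
        aux_trace_mul_nonneg hΘpsd (aux_shift_psd w)
      rw [Matrix.mul_sub, Matrix.trace_sub, Matrix.mul_smul, Matrix.mul_one,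
        Matrix.trace_smul, hAc, hTc, smul_eq_mul, sub_nonneg] at h0
      exact h0
    have hmain : ((2 * (1 - (r : ℝ)) * c : ℝ) : ℂ) * (t : ℂ) ≤ 0 - (c : ℂ) * (t : ℂ) := by
      have hreal : 2 * (1 - (r : ℝ)) * c * t ≤ 0 - c * t := by
        have hr2 : (2 : ℝ) ≤ (r : ℝ) := by exact_mod_cast h2
        nlinarith [mul_nonneg hAre hTre]
      calc ((2 * (1 - (r : ℝ)) * c : ℝ) : ℂ) * (t : ℂ)
          = ((2 * (1 - (r : ℝ)) * c * t : ℝ) : ℂ) := by push_cast; ring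
        _ ≤ ((0 - c * t : ℝ) : ℂ) := by exact_mod_cast hreal
        _ = 0 - (c : ℂ) * (t : ℂ) := by push_cast; ring
    rw [Matrix.mul_sub, Matrix.trace_sub, hTc]
    exact hmain.trans (sub_le_sub h1 h2')
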